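/- Let F be a finite field of odd characteristic with q elements. Then for every integer n ≥ 0: (1) S_F^{adv_n} = S_F^{adv_∞} if and only if S_F^{back_n} = S_F^{back_∞}; (2) S_F^{adv_n} ∩ S_F^{back_∞} = S_F^{cyc} if and only if S_F^{back_n} ∩ S_F^{adv_∞} = S_F^{cyc}; and (3) |S_F^{adv_n}| = |S_F^{back_n}|, and moreover |S_F^{adv_∞}| = |S_F^{back_∞}|. -/
import Mathlib


namespace AGM

variable {K : Type*} [Field K]

/-- A node `(a,b)` is nontrivial if `a`, `b`, `a+b`, `a-b` are all nonzero. -/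
def Nontriv (p : K × K) : Prop :=
  p.1 ≠ 0 ∧ p.2 ≠ 0 ∧ p.1 + p.2 ≠ 0 ∧ p.1 - p.2 ≠ 0

/-- AGM advancement between nontrivial nodes: `2c = a + b` and `d² = ab`. -/
def Adv (p q : K × K) : Prop :=
  Nontriv p ∧ Nontriv q ∧ 2 * q.1 = p.1 + p.2 ∧ q.2 ^ 2 = p.1 * p.2

/-- `AdvN n p`: there is a chain of `n` successive AGM advancements through
nontrivial nodes starting at `p`. -/
def AdvN : ℕ → K × K → Prop
  | 0, p => Nontriv p
  | n + 1, p => ∃ q, Adv p q ∧ AdvN n q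

/-- `BackN n p`: there is a chain of `n` successive AGM advancements through
nontrivial nodes ending at `p`. -/
def BackN : ℕ → K × K → Prop
  | 0, p => Nontriv p
  | n + 1, p => ∃ q, Adv q p ∧ BackN n q

/-- Indefinitely advanceable nodes. -/
def AdvInf (p : K × K) : Prop := ∀ n, AdvN n p

/-- Indefinitely backtrackable nodes. -/
def BackInf (p : K × K) : Prop := ∀ n, BackN n p

/-- Nontrivial k-values: `k ∉ {0, 1, -1}`. -/
def Tk (k : K) : Prop := k ≠ 0 ∧ k ≠ 1 ∧ k ≠ -1

/-- k-advancement: `(1+k₁)² k₂² = 4 k₁` for nontrivial k-values. -/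
def kAdv (k₁ k₂ : K) : Prop := Tk k₁ ∧ Tk k₂ ∧ (1 + k₁) ^ 2 * k₂ ^ 2 = 4 * k₁

/-- `TAdvN n k`: a chain of `n` k-advancements within `T_K` starting at `k`. -/
def TAdvN : ℕ → K → Prop
  | 0, k => Tk k
  | n + 1, k => ∃ k₂, kAdv k k₂ ∧ TAdvN n k₂

/-- `TBackN n k`: a chain of `n` k-advancements within `T_K` ending at `k`. -/
def TBackN : ℕ → K → Prop
  | 0, k => Tk k
  | n + 1, k => ∃ k₁, kAdv k₁ k ∧ TBackN n k₁

/-- Indefinitely advanceable k-values. -/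
def TAdvInf (k : K) : Prop := ∀ n, TAdvN n k

/-- Indefinitely backtrackable k-values. -/
def TBackInf (k : K) : Prop := ∀ n, TBackN n k

end AGM

namespace AGMAux

open AGM

variable {K : Type*} [Field K]

/-- The reversing map `(a,b) ↦ (a+b, a-b)`. -/
def sig (p : K × K) : K × K := (p.1 + p.2, p.1 - p.2)

/-- Scaling of a node. -/
def sm (t : K) (p : K × K) : K × K := (t * p.1, t * p.2)

lemma nontriv_sm {t : K} (ht : t ≠ 0) {p : K × K} (hp : Nontriv p) :
    Nontriv (sm t p) := by
  obtain ⟨h1, h2, h3, h4⟩ := hp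
  refine ⟨mul_ne_zero ht h1, mul_ne_zero ht h2, ?_, ?_⟩
  · show t * p.1 + t * p.2 ≠ 0
    rw [← mul_add]; exact mul_ne_zero ht h3
  · show t * p.1 - t * p.2 ≠ 0
    rw [← mul_sub]; exact mul_ne_zero ht h4

lemma nontriv_sig (h2 : (2 : K) ≠ 0) {p : K × K} (hp : Nontriv p) :
    Nontriv (sig p) := by
  obtain ⟨ha, hb, hc, hd⟩ := hp
  refine ⟨hc, hd, ?_, ?_⟩
  · show p.1 + p.2 + (p.1 - p.2) ≠ 0
    have : p.1 + p.2 + (p.1 - p.2) = 2 * p.1 := by ring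
    rw [this]; exact mul_ne_zero h2 ha
  · show p.1 + p.2 - (p.1 - p.2) ≠ 0
    have : p.1 + p.2 - (p.1 - p.2) = 2 * p.2 := by ring
    rw [this]; exact mul_ne_zero h2 hb

lemma adv_sm {t : K} (ht : t ≠ 0) {p q : K × K} (h : Adv p q) :
    Adv (sm t p) (sm t q) := by
  obtain ⟨hp, hq, h1, h2⟩ := h
  refine ⟨nontriv_sm ht hp, nontriv_sm ht hq, ?_, ?_⟩
  · show 2 * (t * q.1) = t * p.1 + t * p.2
    linear_combination t * h1
  · show (t * q.2) ^ 2 = t * p.1 * (t * p.2)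
    linear_combination t ^ 2 * h2

lemma advN_sm {t : K} (ht : t ≠ 0) : ∀ n (p : K × K), AdvN n p → AdvN n (sm t p) := by
  intro n
  induction n with
  | zero => exact fun p hp => nontriv_sm ht hp
  | succ n ih =>
    rintro p ⟨q, hpq, hq⟩
    exact ⟨sm t q, adv_sm ht hpq, ih q hq⟩

lemma backN_sm {t : K} (ht : t ≠ 0) : ∀ n (p : K × K), BackN n p → BackN n (sm t p) := by
  intro n
  induction n with
  | zero => exact fun p hp => nontriv_sm ht hp
  | succ n ih =>
    rintro p ⟨q, hqp, hq⟩
    exact ⟨sm t q, adv_sm ht hqp, ih q hq⟩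

lemma sm_sm (s t : K) (p : K × K) : sm s (sm t p) = sm (s * t) p := by
  simp [sm, mul_assoc]

lemma sm_one (p : K × K) : sm 1 p = p := by simp [sm]

lemma sig_sig (p : K × K) : sig (sig p) = sm 2 p := by
  simp only [sig, sm]; exact Prod.ext (by ring) (by ring)

lemma sig_sm (t : K) (p : K × K) : sig (sm t p) = sm t (sig p) := by
  simp only [sig, sm]; exact Prod.ext (by ring) (by ring)

lemma adv_sig (h2 : (2 : K) ≠ 0) {p q : K × K} (h : Adv p q) :
    Adv (sig q) (sm 2⁻¹ (sig p)) := by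
  obtain ⟨hp, hq, ha, hb⟩ := h
  have h21 : (2 : K) * 2⁻¹ = 1 := mul_inv_cancel₀ h2
  refine ⟨nontriv_sig h2 hq, nontriv_sm (inv_ne_zero h2) (nontriv_sig h2 hp), ?_, ?_⟩
  · show 2 * (2⁻¹ * (p.1 + p.2)) = q.1 + q.2 + (q.1 - q.2)
    linear_combination (p.1 + p.2) * h21 - ha
  · show (2⁻¹ * (p.1 - p.2)) ^ 2 = (q.1 + q.2) * (q.1 - q.2)
    have hq1 : q.1 = 2⁻¹ * (p.1 + p.2) := by
      linear_combination 2⁻¹ * ha - q.1 * h21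
    rw [hq1]
    linear_combination hb - (2 * 2⁻¹ + 1) * p.1 * p.2 * h21

lemma backN_to_advN (h2 : (2 : K) ≠ 0) :
    ∀ n (p : K × K), BackN n p → AdvN n (sig p) := by
  intro n
  induction n with
  | zero => exact fun p hp => nontriv_sig h2 hp
  | succ n ih =>
    rintro p ⟨q, hqp, hq⟩
    exact ⟨sm 2⁻¹ (sig q), adv_sig h2 hqp, advN_sm (inv_ne_zero h2) n _ (ih q hq)⟩

lemma advN_to_backN (h2 : (2 : K) ≠ 0) :
    ∀ n (p : K × K), AdvN n p → BackN n (sig p) := by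
  intro n
  induction n with
  | zero => exact fun p hp => nontriv_sig h2 hp
  | succ n ih =>
    rintro p ⟨q, hpq, hq⟩
    have h1 : BackN (n + 1) (sm 2⁻¹ (sig p)) := ⟨sig q, adv_sig h2 hpq, ih q hq⟩
    have h3 := backN_sm h2 (n + 1) _ h1
    rwa [sm_sm, mul_inv_cancel₀ h2, sm_one] at h3

lemma advN_iff (h2 : (2 : K) ≠ 0) (n : ℕ) (p : K × K) :
    AdvN n p ↔ BackN n (sig p) := by
  constructor
  · exact advN_to_backN h2 n p
  · intro h
    have h1 := backN_to_advN h2 n _ h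
    rw [sig_sig] at h1
    have h3 := advN_sm (inv_ne_zero h2) n _ h1
    rwa [sm_sm, inv_mul_cancel₀ h2, sm_one] at h3

lemma backN_iff (h2 : (2 : K) ≠ 0) (n : ℕ) (p : K × K) :
    BackN n p ↔ AdvN n (sig p) := by
  constructor
  · exact backN_to_advN h2 n p
  · intro h
    have h1 := advN_to_backN h2 n _ h
    rw [sig_sig] at h1
    have h3 := backN_sm (inv_ne_zero h2) n _ h1
    rwa [sm_sm, inv_mul_cancel₀ h2, sm_one] at h3

lemma advInf_iff (h2 : (2 : K) ≠ 0) (p : K × K) :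
    AdvInf p ↔ BackInf (sig p) :=
  forall_congr' fun n => advN_iff h2 n p

lemma backInf_iff (h2 : (2 : K) ≠ 0) (p : K × K) :
    BackInf p ↔ AdvInf (sig p) :=
  forall_congr' fun n => backN_iff h2 n p

/-- `sig` as an equivalence (char ≠ 2). -/
def sigEquiv (h2 : (2 : K) ≠ 0) : (K × K) ≃ (K × K) where
  toFun := sig
  invFun p := sm 2⁻¹ (sig p)
  left_inv p := by
    show sm 2⁻¹ (sig (sig p)) = p
    rw [sig_sig, sm_sm, inv_mul_cancel₀ h2, sm_one]
  right_inv p := by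
    show sig (sm 2⁻¹ (sig p)) = p
    rw [sig_sm, sig_sig, sm_sm, inv_mul_cancel₀ h2, sm_one]

end AGMAux

theorem stmt18 {F : Type*} [Field F] [Fintype F] (q : ℕ)
    (hq : Fintype.card F = q) (hchar : (2 : F) ≠ 0) :
    ∀ n : ℕ,
      (({p : F × F | AGM.AdvN n p} = {p : F × F | AGM.AdvInf p}) ↔
        ({p : F × F | AGM.BackN n p} = {p : F × F | AGM.BackInf p})) ∧
      (({p : F × F | AGM.AdvN n p} ∩ {p : F × F | AGM.BackInf p} =
          {p : F × F | AGM.AdvInf p} ∩ {p : F × F | AGM.BackInf p}) ↔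
        ({p : F × F | AGM.BackN n p} ∩ {p : F × F | AGM.AdvInf p} =
          {p : F × F | AGM.AdvInf p} ∩ {p : F × F | AGM.BackInf p})) ∧
      (Nat.card {p : F × F // AGM.AdvN n p} =
        Nat.card {p : F × F // AGM.BackN n p}) ∧
      (Nat.card {p : F × F // AGM.AdvInf p} =
        Nat.card {p : F × F // AGM.BackInf p}) := by
  intro n
  refine ⟨?_, ?_, ?_, ?_⟩
  · -- (1)
    rw [Set.ext_iff, Set.ext_iff]
    simp only [Set.mem_setOf_eq]
    constructor
    · intro h p
      rw [AGMAux.backN_iff hchar n p, h (AGMAux.sig p),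
        ← AGMAux.backInf_iff hchar p]
    · intro h p
      rw [AGMAux.advN_iff hchar n p, h (AGMAux.sig p),
        ← AGMAux.advInf_iff hchar p]
  · -- (2)
    rw [Set.ext_iff, Set.ext_iff]
    simp only [Set.mem_inter_iff, Set.mem_setOf_eq]
    constructor
    · intro h p
      calc AGM.BackN n p ∧ AGM.AdvInf p
          ↔ AGM.AdvN n (AGMAux.sig p) ∧ AGM.BackInf (AGMAux.sig p) :=
            and_congr (AGMAux.backN_iff hchar n p) (AGMAux.advInf_iff hchar p)
        _ ↔ AGM.AdvInf (AGMAux.sig p) ∧ AGM.BackInf (AGMAux.sig p) := h (AGMAux.sig p)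
        _ ↔ AGM.BackInf p ∧ AGM.AdvInf p :=
            (and_congr (AGMAux.backInf_iff hchar p) (AGMAux.advInf_iff hchar p)).symm
        _ ↔ AGM.AdvInf p ∧ AGM.BackInf p := and_comm
    · intro h p
      calc AGM.AdvN n p ∧ AGM.BackInf p
          ↔ AGM.BackN n (AGMAux.sig p) ∧ AGM.AdvInf (AGMAux.sig p) :=
            and_congr (AGMAux.advN_iff hchar n p) (AGMAux.backInf_iff hchar p)
        _ ↔ AGM.AdvInf (AGMAux.sig p) ∧ AGM.BackInf (AGMAux.sig p) := h (AGMAux.sig p)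
        _ ↔ AGM.BackInf p ∧ AGM.AdvInf p :=
            (and_congr (AGMAux.backInf_iff hchar p) (AGMAux.advInf_iff hchar p)).symm
        _ ↔ AGM.AdvInf p ∧ AGM.BackInf p := and_comm
  · exact Nat.card_congr
      ((AGMAux.sigEquiv hchar).subtypeEquiv (fun p => AGMAux.advN_iff hchar n p))
  · exact Nat.card_congr
      ((AGMAux.sigEquiv hchar).subtypeEquiv (fun p => AGMAux.advInf_iff hchar p))
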